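/- Let Q = [0,1]^ℕ be the Hilbert cube with the metric d((aₙ), (bₙ)) = Σ_{k=1}^∞ 2^{-k} |a_k − b_k|. Then for every finite-dimensional real normed space X there exists a linear isometric embedding of X into C(Q) whose range consists of d-Lipschitz functions. -/

import Mathlib

section RadRet
variable {Y : Type*} [NormedAddCommGroup Y] [NormedSpace ℝ Y]

noncomputable def radRet (v : Y) : Y := (max 1 ‖v‖)⁻¹ • v

lemma radRet_norm_le (v : Y) : ‖radRet v‖ ≤ 1 := by
  have ha1 : (1:ℝ) ≤ max 1 ‖v‖ := le_max_left _ _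
  have ha0 : (0:ℝ) < max 1 ‖v‖ := lt_of_lt_of_le one_pos ha1
  rw [radRet, norm_smul, norm_inv, Real.norm_of_nonneg ha0.le,
    inv_mul_le_iff₀ ha0, mul_one]
  exact le_max_right _ _

lemma radRet_of_norm_le {v : Y} (h : ‖v‖ ≤ 1) : radRet v = v := by
  rw [radRet, max_eq_left h, inv_one, one_smul]

lemma radRet_lip (v w : Y) : ‖radRet v - radRet w‖ ≤ 2 * ‖v - w‖ := by
  rw [radRet, radRet]
  set a := max 1 ‖v‖ with ha
  set b := max 1 ‖w‖ with hb
  have ha1 : (1:ℝ) ≤ a := le_max_left _ _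
  have hb1 : (1:ℝ) ≤ b := le_max_left _ _
  have ha0 : (0:ℝ) < a := lt_of_lt_of_le one_pos ha1
  have hb0 : (0:ℝ) < b := lt_of_lt_of_le one_pos hb1
  have key : a⁻¹ • v - b⁻¹ • w = a⁻¹ • (v - w) + (a⁻¹ - b⁻¹) • w := by
    rw [smul_sub, sub_smul]; abel
  rw [key]
  have h1 : ‖a⁻¹ • (v - w)‖ ≤ ‖v - w‖ := by
    rw [norm_smul, norm_inv, Real.norm_of_nonneg ha0.le]
    calc a⁻¹ * ‖v - w‖ ≤ 1 * ‖v - w‖ := by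
          apply mul_le_mul_of_nonneg_right _ (norm_nonneg _)
          exact inv_le_one_of_one_le₀ ha1
      _ = ‖v - w‖ := one_mul _
  have h2 : ‖(a⁻¹ - b⁻¹) • w‖ ≤ ‖v - w‖ := by
    rw [norm_smul]
    have hab : |a⁻¹ - b⁻¹| = |b - a| / (a * b) := by
      rw [inv_sub_inv ha0.ne' hb0.ne', abs_div, abs_of_pos (mul_pos ha0 hb0)]
    rw [Real.norm_eq_abs, hab]
    have hba : |b - a| ≤ ‖v - w‖ := by
      have hmax : |‖w‖ ⊔ 1 - ‖v‖ ⊔ 1| ≤ |‖w‖ - ‖v‖| := abs_max_sub_max_le_abs _ _ _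
      have h2 : |‖w‖ - ‖v‖| ≤ ‖w - v‖ := abs_norm_sub_norm_le w v
      rw [ha, hb, max_comm (1:ℝ) ‖v‖, max_comm (1:ℝ) ‖w‖, ← norm_neg (w - v), neg_sub] at *
      exact le_trans hmax h2
    have hwle : ‖w‖ ≤ b := le_max_right _ _
    calc |b - a| / (a * b) * ‖w‖ ≤ ‖v - w‖ / (a * b) * b := by
          apply mul_le_mul ?_ hwle (norm_nonneg _) (by positivity)
          gcongr
      _ = ‖v - w‖ / a := by field_simp
      _ ≤ ‖v - w‖ := by
          rw [div_le_iff₀ ha0]; nlinarith [norm_nonneg (v - w)]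
  calc ‖a⁻¹ • (v - w) + (a⁻¹ - b⁻¹) • w‖ ≤ ‖a⁻¹ • (v - w)‖ + ‖(a⁻¹ - b⁻¹) • w‖ := norm_add_le _ _
    _ ≤ 2 * ‖v - w‖ := by linarith

lemma radRet_continuous : Continuous (radRet : Y → Y) := by
  apply LipschitzWith.continuous (K := 2)
  apply LipschitzWith.of_dist_le_mul
  intro v w
  simpa [dist_eq_norm] using radRet_lip v w
end RadRet

theorem hilbert_cube_contains_all_finite_dimensional
    (X : Type*) [NormedAddCommGroup X] [NormedSpace ℝ X] [FiniteDimensional ℝ X] :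
    ∃ J : X →L[ℝ] C((ℕ → unitInterval), ℝ),
      (∀ x : X, ‖J x‖ = ‖x‖) ∧
      (∀ x : X, ∃ L ≥ 0, ∀ s t : ℕ → unitInterval,
        |J x s - J x t| ≤ L * ∑' k : ℕ, (2 : ℝ)⁻¹ ^ (k + 1) * |(s k : ℝ) - (t k : ℝ)|) := by
  classical
  let bb : Module.Basis (Fin (Module.finrank ℝ (X →L[ℝ] ℝ))) ℝ (X →L[ℝ] ℝ) :=
    Module.finBasis ℝ (X →L[ℝ] ℝ)
  let M : Fin (Module.finrank ℝ (X →L[ℝ] ℝ)) → ℝ := fun j => ‖LinearMap.toContinuousLinearMap (bb.coord j)‖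
  have hM0 : ∀ j, 0 ≤ M j := fun j => by simp only [M]; exact norm_nonneg (LinearMap.toContinuousLinearMap (bb.coord j))
  have hcoord : ∀ (j) (f : X →L[ℝ] ℝ), |bb.repr f j| ≤ M j * ‖f‖ := by
    intro j f
    have := (LinearMap.toContinuousLinearMap (bb.coord j)).le_opNorm f
    simpa [Module.Basis.coord_apply, Real.norm_eq_abs] using this
  -- the affine map from the cube onto a box containing the unit ball of Y
  let ψ : (ℕ → unitInterval) → (X →L[ℝ] ℝ) :=
    fun s => ∑ j : Fin (Module.finrank ℝ (X →L[ℝ] ℝ)), ((2 * M j) * ((s j : ℝ)) - M j) • bb j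
  have hψc : Continuous ψ := by
    apply continuous_finset_sum
    intro j _
    refine Continuous.smul (f := fun a : ℕ → unitInterval => (2 * M j) * ((a j : ℝ)) - M j) ?_ continuous_const
    fun_prop
  let g : (ℕ → unitInterval) → (X →L[ℝ] ℝ) := fun s => radRet (ψ s)
  have hgc : Continuous g := radRet_continuous.comp hψc
  have hg1 : ∀ s, ‖g s‖ ≤ 1 := fun s => radRet_norm_le _
  -- surjectivity onto the unit ball
  have hsurj : ∀ f : X →L[ℝ] ℝ, ‖f‖ ≤ 1 → ∃ s, ψ s = f := by
    intro f hf
    have hbound : ∀ j, |bb.repr f j| ≤ M j := by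
      intro j
      calc |bb.repr f j| ≤ M j * ‖f‖ := hcoord j f
        _ ≤ M j * 1 := by apply mul_le_mul_of_nonneg_left hf (hM0 j)
        _ = M j := mul_one _
    have hmem : ∀ j : Fin (Module.finrank ℝ (X →L[ℝ] ℝ)), (if M j = 0 then 0 else (bb.repr f j + M j)/(2 * M j)) ∈ unitInterval := by
      intro j
      by_cases h : M j = 0
      · simp [h, unitInterval.zero_mem]
      · have hMpos : 0 < M j := lt_of_le_of_ne (hM0 j) (Ne.symm h)
        have hj := abs_le.mp (hbound j)
        simp only [h, if_false, Set.mem_Icc]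
        constructor
        · apply div_nonneg (by linarith) (by linarith)
        · rw [div_le_one (by linarith)]; linarith
    let u : Fin (Module.finrank ℝ (X →L[ℝ] ℝ)) → unitInterval := fun j => ⟨_, hmem j⟩
    refine ⟨fun k => if h : k < Module.finrank ℝ (X →L[ℝ] ℝ) then u ⟨k, h⟩ else 0, ?_⟩
    have hval : ∀ j : Fin (Module.finrank ℝ (X →L[ℝ] ℝ)), (2 * M j) * ((u j : ℝ)) - M j = bb.repr f j := by
      intro j
      by_cases h : M j = 0
      · have hb := hbound j
        rw [h] at hb
        have hz : bb.repr f j = 0 := abs_nonpos_iff.mp hb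
        simp [u, h, hz]
      · have hMpos : 0 < M j := lt_of_le_of_ne (hM0 j) (Ne.symm h)
        simp only [u, h, if_false]
        field_simp
        ring
    have : ψ (fun k => if h : k < Module.finrank ℝ (X →L[ℝ] ℝ) then u ⟨k, h⟩ else 0) = ∑ j : Fin (Module.finrank ℝ (X →L[ℝ] ℝ)), bb.repr f j • bb j := by
      apply Finset.sum_congr rfl
      intro j _
      congr 1
      rw [← hval j]
      congr 1
      simp only [Fin.is_lt, dif_pos]
    rw [this, bb.sum_repr]
  -- the continuous functions
  have hcont : ∀ x : X, Continuous (fun s => g s x) := by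
    intro x
    exact (ContinuousLinearMap.apply ℝ ℝ x).continuous.comp hgc
  let Jfun : X → C((ℕ → unitInterval), ℝ) := fun x => ⟨fun s => g s x, hcont x⟩
  have hJbd : ∀ x s, |g s x| ≤ ‖x‖ := by
    intro x s
    calc |g s x| ≤ ‖g s‖ * ‖x‖ := (g s).le_opNorm x
      _ ≤ 1 * ‖x‖ := mul_le_mul_of_nonneg_right (hg1 s) (norm_nonneg x)
      _ = ‖x‖ := one_mul _
  let Jlin : X →ₗ[ℝ] C((ℕ → unitInterval), ℝ) :=
    { toFun := Jfun
      map_add' := by intro x y; ext s; simp [Jfun]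
      map_smul' := by intro c x; ext s; simp [Jfun] }
  have hJnormle : ∀ x : X, ‖Jlin x‖ ≤ 1 * ‖x‖ := by
    intro x
    rw [one_mul]
    apply (ContinuousMap.norm_le _ (norm_nonneg x)).mpr
    intro s
    simpa [Jlin, Jfun] using hJbd x s
  let J : X →L[ℝ] C((ℕ → unitInterval), ℝ) := Jlin.mkContinuous 1 hJnormle
  refine ⟨J, ?_, ?_⟩
  · intro x
    apply le_antisymm (by simpa [J] using hJnormle x)
    obtain ⟨f, hf1, hfx⟩ := exists_dual_vector'' ℝ x
    obtain ⟨s, hs⟩ := hsurj f hf1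
    have hgs : g s = f := by rw [← hs] at hf1 ⊢; exact radRet_of_norm_le hf1
    calc ‖x‖ = f x := hfx.symm
      _ = (J x) s := by simp [J, Jlin, Jfun, hgs]
      _ ≤ ‖(J x) s‖ := le_abs_self _
      _ ≤ ‖J x‖ := (J x).norm_coe_le_norm s
  · intro x
    set C : ℝ := ∑ j : Fin (Module.finrank ℝ (X →L[ℝ] ℝ)), 2 * M j * ‖bb j‖ * 2 ^ ((j : ℕ) + 1) with hC
    have hC0 : 0 ≤ C := by
      apply Finset.sum_nonneg
      intro j _
      have := hM0 j
      positivity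
    refine ⟨2 * ‖x‖ * C, by positivity, ?_⟩
    intro s t
    set T : ℝ := ∑' k : ℕ, (2 : ℝ)⁻¹ ^ (k + 1) * |(s k : ℝ) - (t k : ℝ)| with hT
    have habs1 : ∀ k : ℕ, |(s k : ℝ) - (t k : ℝ)| ≤ 1 := by
      intro k
      rw [abs_sub_le_iff]
      constructor
      · linarith [(s k).2.2, (t k).2.1]
      · linarith [(t k).2.2, (s k).2.1]
    have hsum : Summable (fun k : ℕ => (2 : ℝ)⁻¹ ^ (k + 1) * |(s k : ℝ) - (t k : ℝ)|) := by
      apply Summable.of_nonneg_of_le (fun k => by positivity) (fun k => ?_)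
        (summable_geometric_of_lt_one (by norm_num) (by norm_num : (2:ℝ)⁻¹ < 1))
      calc (2 : ℝ)⁻¹ ^ (k + 1) * |(s k : ℝ) - (t k : ℝ)| ≤ (2 : ℝ)⁻¹ ^ (k + 1) * 1 := by
            apply mul_le_mul_of_nonneg_left (habs1 k) (by positivity)
        _ = (2 : ℝ)⁻¹ ^ (k+1) := mul_one _
        _ ≤ (2 : ℝ)⁻¹ ^ k := by
            apply pow_le_pow_of_le_one (by norm_num) (by norm_num)
            omega
    have hT0 : 0 ≤ T := tsum_nonneg (fun k => by positivity)
    have hcoordbound : ∀ j : Fin (Module.finrank ℝ (X →L[ℝ] ℝ)), |(s j : ℝ) - (t j : ℝ)| ≤ 2 ^ ((j : ℕ) + 1) * T := by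
      intro j
      have hle : (2 : ℝ)⁻¹ ^ ((j:ℕ) + 1) * |(s j : ℝ) - (t j : ℝ)| ≤ T :=
        Summable.le_tsum hsum (j : ℕ) (fun k _ => by positivity)
      have h2 : (2:ℝ) ^ ((j:ℕ)+1) * ((2 : ℝ)⁻¹ ^ ((j:ℕ) + 1) * |(s j : ℝ) - (t j : ℝ)|)
          = |(s j : ℝ) - (t j : ℝ)| := by
        rw [← mul_assoc, ← mul_pow]
        norm_num
      calc |(s j : ℝ) - (t j : ℝ)| = (2:ℝ) ^ ((j:ℕ)+1) * ((2 : ℝ)⁻¹ ^ ((j:ℕ) + 1) * |(s j : ℝ) - (t j : ℝ)|) := h2.symm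
        _ ≤ (2:ℝ) ^ ((j:ℕ)+1) * T := by
            apply mul_le_mul_of_nonneg_left hle (by positivity)
    have hψdiff : ‖ψ s - ψ t‖ ≤ C * T := by
      have heq : ψ s - ψ t = ∑ j : Fin (Module.finrank ℝ (X →L[ℝ] ℝ)), ((2 * M j) * ((s j : ℝ) - (t j : ℝ))) • bb j := by
        rw [← Finset.sum_sub_distrib]
        apply Finset.sum_congr rfl
        intro j _
        refine (sub_smul _ _ _).symm.trans ?_
        congr 1
        ring
      rw [heq]
      calc ‖∑ j : Fin (Module.finrank ℝ (X →L[ℝ] ℝ)), ((2 * M j) * ((s j : ℝ) - (t j : ℝ))) • bb j‖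
          ≤ ∑ j : Fin (Module.finrank ℝ (X →L[ℝ] ℝ)), ‖((2 * M j) * ((s j : ℝ) - (t j : ℝ))) • bb j‖ := norm_sum_le _ _
        _ ≤ ∑ j : Fin (Module.finrank ℝ (X →L[ℝ] ℝ)), 2 * M j * ‖bb j‖ * 2 ^ ((j : ℕ) + 1) * T := by
            apply Finset.sum_le_sum
            intro j _
            have hns := norm_smul ((2 * M j) * ((s j : ℝ) - (t j : ℝ))) (bb j)
            rw [hns, Real.norm_eq_abs, abs_mul]
            have hMj := hM0 j
            have h1 : |2 * M j| = 2 * M j := abs_of_nonneg (by linarith)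
            rw [h1]
            calc 2 * M j * |(s j : ℝ) - (t j : ℝ)| * ‖bb j‖
                ≤ 2 * M j * (2 ^ ((j : ℕ) + 1) * T) * ‖bb j‖ := by
                  apply mul_le_mul_of_nonneg_right _ (norm_nonneg _)
                  exact mul_le_mul_of_nonneg_left (hcoordbound j) (by linarith)
              _ = 2 * M j * ‖bb j‖ * 2 ^ ((j : ℕ) + 1) * T := by ring
        _ = C * T := by rw [hC, Finset.sum_mul]
    have hgdiff : ‖g s - g t‖ ≤ 2 * (C * T) := by
      calc ‖g s - g t‖ ≤ 2 * ‖ψ s - ψ t‖ := radRet_lip _ _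
        _ ≤ 2 * (C * T) := by linarith
    calc |J x s - J x t| = |(g s - g t) x| := by
          simp [J, Jlin, Jfun, ContinuousLinearMap.sub_apply]
      _ ≤ ‖g s - g t‖ * ‖x‖ := (g s - g t).le_opNorm x
      _ ≤ 2 * (C * T) * ‖x‖ := by
          apply mul_le_mul_of_nonneg_right hgdiff (norm_nonneg x)
      _ = 2 * ‖x‖ * C * T := by ring
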